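/- Let m_x, m_w, m_y be positive integers, s_x, s_w, s_y > 0, and let X, W, Y be independent random variables, Gamma-distributed with shapes m_x, m_w, m_y and scales s_x, s_w, s_y respectively. Then for any theta > 0 and c > 0: P( min(X, W) >= theta*(Y + c) ) = exp( - theta*c*(1/s_x + 1/s_w) ) * sum_{n=0}^{m_x-1} sum_{n'=0}^{m_w-1} [ (theta/s_x)^n * (theta/s_w)^{n'} / (n! * n'!) ] * sum_{i=0}^{n+n'} C(n+n', i) * c^{n+n'-i} * [ Gamma(m_y + i) / (Gamma(m_y) * s_y^{m_y}) ] * ( theta*(1/s_x + 1/s_w) + 1/s_y )^{-(m_y+i)}, where C denotes the binomial coefficient and Gamma is the Gamma function. -/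

import Mathlib

open MeasureTheory ProbabilityTheory Real Finset Set

section helpers


/-- auxiliary: the survival polynomial -/
noncomputable def survFn (m : ℕ) (r t : ℝ) : ℝ :=
  Real.exp (-(r * t)) * ∑ n ∈ Finset.range m, (r * t) ^ n / (Nat.factorial n : ℝ)

lemma hasDerivAt_survFn (m : ℕ) (hm : 0 < m) (r : ℝ) (t : ℝ) :
    HasDerivAt (survFn m r)
      (-(r ^ m * t ^ (m - 1) * Real.exp (-(r * t)) / (Nat.factorial (m - 1) : ℝ))) t := by
  -- survFn m r = ∑ n in range m, f n where f n t = exp(-(r t)) * (r t)^n / n!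
  have key : ∀ n : ℕ, HasDerivAt (fun t => Real.exp (-(r * t)) * (r * t) ^ n / (Nat.factorial n : ℝ))
      ((if n = 0 then 0 else r * Real.exp (-(r * t)) * (r * t) ^ (n - 1) / (Nat.factorial (n-1) : ℝ))
        - r * Real.exp (-(r * t)) * (r * t) ^ n / (Nat.factorial n : ℝ)) t := by
    intro n
    have h1 : HasDerivAt (fun t : ℝ => Real.exp (-(r * t))) (-r * Real.exp (-(r * t))) t := by
      have := (hasDerivAt_id t).const_mul r
      have := ((this.neg).exp)
      simpa [mul_comm] using this
    have h2 : HasDerivAt (fun t : ℝ => (r * t) ^ n) ((n : ℝ) * (r * t) ^ (n - 1) * r) t := by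
      have hrt : HasDerivAt (fun t : ℝ => r * t) r t := by
        simpa using (hasDerivAt_id t).const_mul r
      exact (hasDerivAt_pow n (r * t)).comp t hrt
    have := (h1.mul h2).div_const (Nat.factorial n : ℝ)
    refine this.congr_deriv ?_
    rcases Nat.eq_zero_or_pos n with hn | hn
    · subst hn; simp
    · have hfac : (Nat.factorial n : ℝ) = n * (Nat.factorial (n - 1) : ℝ) := by
        rw [← Nat.cast_mul, Nat.mul_factorial_pred hn.ne']
      rw [if_neg hn.ne']
      field_simp [hfac]
      rw [hfac]; ring
  have hsum : HasDerivAt (fun t => ∑ n ∈ Finset.range m,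
      Real.exp (-(r * t)) * (r * t) ^ n / (Nat.factorial n : ℝ))
      (∑ n ∈ Finset.range m,
        ((if n = 0 then 0 else r * Real.exp (-(r * t)) * (r * t) ^ (n - 1) / (Nat.factorial (n-1) : ℝ))
        - r * Real.exp (-(r * t)) * (r * t) ^ n / (Nat.factorial n : ℝ))) t :=
    HasDerivAt.fun_sum fun n _ => key n
  have heq : (fun t => ∑ n ∈ Finset.range m,
      Real.exp (-(r * t)) * (r * t) ^ n / (Nat.factorial n : ℝ)) = survFn m r := by
    funext u; rw [survFn, Finset.mul_sum]; congr 1; funext n; ring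
  rw [heq] at hsum
  convert hsum using 1
  -- telescoping
  have : ∀ n : ℕ, (if n = 0 then (0:ℝ) else r * Real.exp (-(r * t)) * (r * t) ^ (n - 1) / (Nat.factorial (n-1) : ℝ))
      = (fun k : ℕ => if k = 0 then (0:ℝ) else r * Real.exp (-(r * t)) * (r * t) ^ (k - 1) / (Nat.factorial (k-1) : ℝ)) n := fun n => rfl
  set w : ℕ → ℝ := fun k => if k = 0 then (0:ℝ) else r * Real.exp (-(r * t)) * (r * t) ^ (k - 1) / (Nat.factorial (k-1) : ℝ) with hw
  have hterm : ∀ n : ℕ, (if n = 0 then (0:ℝ) else r * Real.exp (-(r * t)) * (r * t) ^ (n - 1) / (Nat.factorial (n-1) : ℝ))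
        - r * Real.exp (-(r * t)) * (r * t) ^ n / (Nat.factorial n : ℝ) = w n - w (n + 1) := by
    intro n
    simp only [hw, Nat.add_sub_cancel]
    rw [if_neg (Nat.succ_ne_zero n)]
  rw [Finset.sum_congr rfl (fun n _ => hterm n), Finset.sum_range_sub']
  simp only [hw, if_pos rfl, if_neg hm.ne']
  rw [zero_sub]
  have : (r*t)^(m-1) = r^(m-1) * t^(m-1) := mul_pow r t (m-1)
  rw [this]
  have hrm : r ^ m = r * r ^ (m - 1) := by
    rw [← pow_succ']
    congr 1
    omega
  rw [hrm]
  ring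

lemma integrableOn_pow_mul_exp_neg {b : ℝ} (hb : 0 < b) (k : ℕ) :
    IntegrableOn (fun x : ℝ => x ^ k * Real.exp (-(b * x))) (Ioi 0) := by
  have h0 : IntegrableOn (fun x : ℝ => Real.exp (-x) * x ^ ((k + 1 : ℝ) - 1)) (Ioi 0) :=
    Real.GammaIntegral_convergent (by positivity)
  have h1 : IntegrableOn (fun x : ℝ => Real.exp (-(b * x)) * (b * x) ^ ((k + 1 : ℝ) - 1))
      (Ioi 0) := by
    have := (MeasureTheory.integrableOn_Ioi_comp_mul_left_iff
      (fun x : ℝ => Real.exp (-x) * x ^ ((k + 1 : ℝ) - 1)) 0 hb).mpr (by simpa using h0)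
    simpa [mul_zero] using this
  have h2 : IntegrableOn (fun x : ℝ => x ^ k * Real.exp (-(b * x))) (Ioi 0) := by
    have h1' : IntegrableOn (fun x : ℝ => (b ^ k)⁻¹ *
        (Real.exp (-(b * x)) * (b * x) ^ ((k + 1 : ℝ) - 1))) (Ioi 0) := h1.const_mul _
    refine h1'.congr_fun (fun x hx => ?_) measurableSet_Ioi
    have hx0 : (0:ℝ) < x := hx
    have : (b * x) ^ ((k + 1 : ℝ) - 1) = (b * x) ^ k := by
      rw [add_sub_cancel_right, ← Real.rpow_natCast (b*x) k]
    dsimp only; rw [this, mul_pow]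
    field_simp
  exact h2

lemma tendsto_survFn (m : ℕ) {r : ℝ} (hr : 0 < r) :
    Filter.Tendsto (survFn m r) Filter.atTop (nhds 0) := by
  have hrt : Filter.Tendsto (fun t : ℝ => r * t) Filter.atTop Filter.atTop :=
    Filter.tendsto_id.const_mul_atTop hr
  have : Filter.Tendsto (fun t : ℝ => ∑ n ∈ Finset.range m,
      (r * t) ^ n * Real.exp (-(r * t)) / (Nat.factorial n : ℝ)) Filter.atTop (nhds 0) := by
    have hsum := tendsto_finset_sum (Finset.range m) (fun n _ =>
      (((tendsto_pow_mul_exp_neg_atTop_nhds_zero n).comp hrt).div_const (Nat.factorial n : ℝ)))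
    simpa using hsum
  refine this.congr (fun t => ?_)
  rw [survFn, Finset.mul_sum]
  congr 1; funext n; ring

lemma gammaPDFReal_eq_of_pos {m : ℕ} (hm : 0 < m) {r x : ℝ} (hr : 0 < r) (hx : 0 < x) :
    gammaPDFReal m r x
      = r ^ m * x ^ (m - 1) * Real.exp (-(r * x)) / (Nat.factorial (m - 1) : ℝ) := by
  rw [gammaPDFReal, if_pos hx.le]
  have h1 : r ^ (m : ℝ) = r ^ m := Real.rpow_natCast r m
  have h2 : x ^ ((m : ℝ) - 1) = x ^ (m - 1) := by
    rw [show (m : ℝ) - 1 = ((m - 1 : ℕ) : ℝ) by push_cast [Nat.cast_sub hm]; ring,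
      Real.rpow_natCast]
  have h3 : Real.Gamma (m : ℝ) = (Nat.factorial (m - 1) : ℝ) := by
    rw [show (m : ℝ) = ((m - 1 : ℕ) : ℝ) + 1 by push_cast [Nat.cast_sub hm]; ring,
      Real.Gamma_nat_eq_factorial]
  rw [h1, h2, h3]
  ring

lemma integral_gammaPDFReal_Ioi {m : ℕ} (hm : 0 < m) {r t : ℝ} (hr : 0 < r) (ht : 0 < t) :
    ∫ x in Ioi t, gammaPDFReal m r x = survFn m r t := by
  have hint : IntegrableOn (fun x : ℝ =>
      -(r ^ m * x ^ (m - 1) * Real.exp (-(r * x)) / (Nat.factorial (m - 1) : ℝ))) (Ioi t) := by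
    have h0 := ((integrableOn_pow_mul_exp_neg hr (m - 1)).mono_set (Ioi_subset_Ioi ht.le))
    have h1 : IntegrableOn (fun x : ℝ => -(r ^ m / (Nat.factorial (m-1) : ℝ) *
        (x ^ (m-1) * Real.exp (-(r * x))))) (Ioi t) := (h0.const_mul _).neg
    exact h1.congr_fun (fun x hx => by ring) measurableSet_Ioi
  have hftc := integral_Ioi_of_hasDerivAt_of_tendsto
    (f := survFn m r)
    (f' := fun x => -(r ^ m * x ^ (m - 1) * Real.exp (-(r * x)) / (Nat.factorial (m - 1) : ℝ)))
    (a := t) (m := 0)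
    ((hasDerivAt_survFn m hm r t).continuousAt.continuousWithinAt)
    (fun x _ => hasDerivAt_survFn m hm r x)
    hint (tendsto_survFn m hr)
  rw [integral_neg] at hftc
  have : ∫ x in Ioi t, r ^ m * x ^ (m - 1) * Real.exp (-(r * x)) / (Nat.factorial (m - 1) : ℝ)
      = survFn m r t := by linarith
  rw [← this]
  refine setIntegral_congr_fun measurableSet_Ioi (fun x hx => ?_)
  exact gammaPDFReal_eq_of_pos hm hr (ht.trans hx)

lemma gammaMeasure_Ici {m : ℕ} (hm : 0 < m) {r t : ℝ} (hr : 0 < r) (ht : 0 < t) :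
    gammaMeasure m r (Set.Ici t) = ENNReal.ofReal (survFn m r t) := by
  rw [gammaMeasure, withDensity_apply _ measurableSet_Ici,
    ← MeasureTheory.restrict_Ioi_eq_restrict_Ici]
  have hint : IntegrableOn (gammaPDFReal m r) (Ioi t) := by
    refine (IntegrableOn.congr_fun ?_ (fun x hx =>
      (gammaPDFReal_eq_of_pos hm hr (ht.trans hx)).symm) measurableSet_Ioi)
    have h0 := ((integrableOn_pow_mul_exp_neg hr (m - 1)).mono_set (Ioi_subset_Ioi ht.le))
    have h1 : IntegrableOn (fun x : ℝ => r ^ m / (Nat.factorial (m-1) : ℝ) *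
        (x ^ (m-1) * Real.exp (-(r * x)))) (Ioi t) := h0.const_mul _
    exact h1.congr_fun (fun x hx => by ring) measurableSet_Ioi
  rw [show (fun x => gammaPDF m r x) = fun x => ENNReal.ofReal (gammaPDFReal m r x) from rfl]
  rw [← MeasureTheory.ofReal_integral_eq_lintegral_ofReal hint
    (ae_of_all _ (fun x => gammaPDFReal_nonneg (by exact_mod_cast hm) hr x)),
    integral_gammaPDFReal_Ioi hm hr ht]

lemma survFn_nonneg {m : ℕ} {r t : ℝ} (hr : 0 < r) (ht : 0 ≤ t) : 0 ≤ survFn m r t := by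
  rw [survFn]
  apply mul_nonneg (Real.exp_nonneg _)
  exact Finset.sum_nonneg fun n _ => by positivity

lemma continuous_survFn (m : ℕ) (r : ℝ) : Continuous (survFn m r) := by
  unfold survFn
  exact ((Real.continuous_exp.comp ((continuous_const.mul continuous_id).neg))).mul
    (continuous_finset_sum _ fun n _ =>
      ((continuous_const.mul continuous_id).pow n).div_const _)

lemma Gamma_nat_cast {m : ℕ} (hm : 0 < m) :
    Real.Gamma (m : ℝ) = (Nat.factorial (m - 1) : ℝ) := by
  rw [show (m : ℝ) = ((m - 1 : ℕ) : ℝ) + 1 by push_cast [Nat.cast_sub hm]; ring,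
    Real.Gamma_nat_eq_factorial]

lemma moment_integral {b : ℝ} (hb : 0 < b) {m : ℕ} (hm : 0 < m) (i : ℕ) :
    ∫ y in Ioi 0, y ^ (m - 1 + i) * Real.exp (-(b * y)) =
      Real.Gamma ((m : ℝ) + i) * b ^ (-((m : ℤ) + i)) := by
  have h := Real.integral_rpow_mul_exp_neg_mul_Ioi
    (a := (m : ℝ) + i) (by positivity) hb
  have hL : ∫ y in Ioi 0, y ^ (m - 1 + i) * Real.exp (-(b * y))
      = ∫ t in Ioi 0, t ^ ((m : ℝ) + i - 1) * Real.exp (-(b * t)) := by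
    refine setIntegral_congr_fun measurableSet_Ioi (fun y hy => ?_)
    have : ((m : ℝ) + i - 1) = ((m - 1 + i : ℕ) : ℝ) := by
      push_cast [Nat.cast_sub hm]; ring
    rw [this, Real.rpow_natCast]
  rw [hL, h]
  have h1 : ((1:ℝ) / b) ^ ((m : ℝ) + i) = ((1:ℝ)/b) ^ (m + i : ℕ) := by
    rw [show (m : ℝ) + i = ((m + i : ℕ) : ℝ) by push_cast; ring, Real.rpow_natCast]
  rw [h1]
  have h2 : ((1:ℝ)/b) ^ (m + i : ℕ) = b ^ (-((m : ℤ) + i)) := by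
    rw [one_div, inv_pow, ← zpow_natCast b (m + i), ← zpow_neg]
    congr 1
  rw [h2]
  ring

lemma pointwise_expand (m_x m_w m_y : ℕ) (hmy : 0 < m_y)
    (s_x s_w s_y θ c : ℝ) (hsx : 0 < s_x) (hsw : 0 < s_w) (hsy : 0 < s_y)
    (hθ : 0 < θ) (hc : 0 < c) (y : ℝ) (hy : 0 < y) :
    gammaPDFReal m_y (1/s_y) y *
        (survFn m_x (1/s_x) (θ*(y+c)) * survFn m_w (1/s_w) (θ*(y+c)))
      = ∑ n ∈ Finset.range m_x, ∑ n' ∈ Finset.range m_w, ∑ i ∈ Finset.range (n+n'+1),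
          ((1/s_y)^m_y / (Nat.factorial (m_y-1) : ℝ) * Real.exp (-(θ*c*(1/s_x+1/s_w))) *
            ((θ/s_x)^n * (θ/s_w)^n' / ((Nat.factorial n : ℝ) * (Nat.factorial n' : ℝ))) *
            ((n+n').choose i : ℝ) * c^(n+n'-i)) *
          (y^(m_y-1+i) * Real.exp (-((θ*(1/s_x+1/s_w)+1/s_y)*y))) := by
  have hry : (0:ℝ) < 1/s_y := by positivity
  rw [gammaPDFReal_eq_of_pos hmy hry hy, survFn, survFn]
  have hA : ∀ P E1 S1 E2 S2 : ℝ, P * (E1*S1 * (E2*S2)) = P*E1*E2 * (S1*S2) :=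
    fun _ _ _ _ _ => by ring
  rw [hA, Finset.sum_mul_sum, Finset.mul_sum]
  refine Finset.sum_congr rfl fun n _ => ?_
  rw [Finset.mul_sum]
  refine Finset.sum_congr rfl fun n' _ => ?_
  have hD : ∑ i ∈ Finset.range (n+n'+1),
      ((1/s_y)^m_y / (Nat.factorial (m_y-1) : ℝ) * Real.exp (-(θ*c*(1/s_x+1/s_w))) *
        ((θ/s_x)^n * (θ/s_w)^n' / ((Nat.factorial n : ℝ) * (Nat.factorial n' : ℝ))) *
        ((n+n').choose i : ℝ) * c^(n+n'-i)) *
      (y^(m_y-1+i) * Real.exp (-((θ*(1/s_x+1/s_w)+1/s_y)*y)))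
      = ((1/s_y)^m_y / (Nat.factorial (m_y-1) : ℝ) * Real.exp (-(θ*c*(1/s_x+1/s_w))) *
        ((θ/s_x)^n * (θ/s_w)^n' / ((Nat.factorial n : ℝ) * (Nat.factorial n' : ℝ))) *
        (y^(m_y-1) * Real.exp (-((θ*(1/s_x+1/s_w)+1/s_y)*y)))) * (y+c)^(n+n') := by
    rw [add_pow, Finset.mul_sum]
    refine Finset.sum_congr rfl fun i hi => ?_
    rw [pow_add y (m_y-1) i]
    ring
  rw [hD]
  have hp1 : ((1:ℝ)/s_x*(θ*(y+c)))^n = (θ/s_x)^n*(y+c)^n := by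
    rw [show (1:ℝ)/s_x*(θ*(y+c)) = θ/s_x*(y+c) by ring, mul_pow]
  have hp2 : ((1:ℝ)/s_w*(θ*(y+c)))^n' = (θ/s_w)^n'*(y+c)^n' := by
    rw [show (1:ℝ)/s_w*(θ*(y+c)) = θ/s_w*(y+c) by ring, mul_pow]
  rw [hp1, hp2, pow_add (y+c) n n']
  have hexp : Real.exp (-(1/s_y*y)) * Real.exp (-(1/s_x*(θ*(y+c)))) *
        Real.exp (-(1/s_w*(θ*(y+c))))
      = Real.exp (-(θ*c*(1/s_x+1/s_w))) * Real.exp (-((θ*(1/s_x+1/s_w)+1/s_y)*y)) := by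
    rw [← Real.exp_add, ← Real.exp_add, ← Real.exp_add]
    congr 1; ring
  linear_combination ((1/s_y)^m_y * y^(m_y-1) / (Nat.factorial (m_y-1) : ℝ) *
    ((θ/s_x)^n*(y+c)^n) * ((θ/s_w)^n'*(y+c)^n') /
    ((Nat.factorial n : ℝ) * (Nat.factorial n' : ℝ))) * hexp

lemma final_integral (m_x m_w m_y : ℕ) (hmx : 0 < m_x) (hmw : 0 < m_w) (hmy : 0 < m_y)
    (s_x s_w s_y : ℝ) (hsx : 0 < s_x) (hsw : 0 < s_w) (hsy : 0 < s_y)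
    (θ c : ℝ) (hθ : 0 < θ) (hc : 0 < c) :
    ∫ y in Ioi 0, gammaPDFReal m_y (1/s_y) y *
        (survFn m_x (1/s_x) (θ*(y+c)) * survFn m_w (1/s_w) (θ*(y+c))) =
      Real.exp (-(θ * c * (1 / s_x + 1 / s_w))) *
        ∑ n ∈ Finset.range m_x, ∑ n' ∈ Finset.range m_w,
          ((θ / s_x) ^ n * (θ / s_w) ^ n' / ((Nat.factorial n : ℝ) * (Nat.factorial n' : ℝ))) *
          ∑ i ∈ Finset.range (n + n' + 1),
            ((n + n').choose i : ℝ) * c ^ (n + n' - i) *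
            (Real.Gamma ((m_y : ℝ) + i) / (Real.Gamma m_y * s_y ^ m_y)) *
            (θ * (1 / s_x + 1 / s_w) + 1 / s_y) ^ (-((m_y : ℤ) + i)) := by
  have hb : (0:ℝ) < θ*(1/s_x+1/s_w)+1/s_y := by positivity
  have hterm : ∀ n n' i : ℕ, IntegrableOn (fun y : ℝ =>
      ((1/s_y)^m_y / (Nat.factorial (m_y-1) : ℝ) * Real.exp (-(θ*c*(1/s_x+1/s_w))) *
        ((θ/s_x)^n * (θ/s_w)^n' / ((Nat.factorial n : ℝ) * (Nat.factorial n' : ℝ))) *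
        ((n+n').choose i : ℝ) * c^(n+n'-i)) *
      (y^(m_y-1+i) * Real.exp (-((θ*(1/s_x+1/s_w)+1/s_y)*y)))) (Ioi 0) :=
    fun n n' i => (integrableOn_pow_mul_exp_neg hb (m_y-1+i)).const_mul _
  rw [setIntegral_congr_fun measurableSet_Ioi (fun y hy =>
    pointwise_expand m_x m_w m_y hmy s_x s_w s_y θ c hsx hsw hsy hθ hc y hy)]
  rw [integral_finset_sum _ (fun n _ => integrable_finset_sum _
    (fun n' _ => integrable_finset_sum _ (fun i _ => hterm n n' i)))]
  trans (∑ n ∈ Finset.range m_x, ∑ n' ∈ Finset.range m_w, ∑ i ∈ Finset.range (n+n'+1),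
      ((1/s_y)^m_y / (Nat.factorial (m_y-1) : ℝ) * Real.exp (-(θ*c*(1/s_x+1/s_w))) *
        ((θ/s_x)^n * (θ/s_w)^n' / ((Nat.factorial n : ℝ) * (Nat.factorial n' : ℝ))) *
        ((n+n').choose i : ℝ) * c^(n+n'-i)) *
      (Real.Gamma ((m_y:ℝ)+i) * (θ*(1/s_x+1/s_w)+1/s_y) ^ (-((m_y:ℤ)+i))))
  · refine Finset.sum_congr rfl fun n _ => ?_
    rw [integral_finset_sum _ (fun n' _ => integrable_finset_sum _ (fun i _ => hterm n n' i))]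
    refine Finset.sum_congr rfl fun n' _ => ?_
    rw [integral_finset_sum _ (fun i _ => hterm n n' i)]
    refine Finset.sum_congr rfl fun i _ => ?_
    rw [MeasureTheory.integral_const_mul, moment_integral hb hmy i]
  · simp only [Finset.mul_sum]
    refine Finset.sum_congr rfl fun n _ => ?_
    refine Finset.sum_congr rfl fun n' _ => ?_
    refine Finset.sum_congr rfl fun i _ => ?_
    rw [Gamma_nat_cast hmy]
    have h1 : (Nat.factorial (m_y-1) : ℝ) ≠ 0 := by positivity
    have h2 : (Nat.factorial n : ℝ) ≠ 0 := by positivity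
    have h3 : (Nat.factorial n' : ℝ) ≠ 0 := by positivity
    have h4 : s_y ≠ 0 := ne_of_gt hsy
    field_simp
    ring_nf; rw [← mul_pow, mul_inv_cancel₀ h4, one_pow, one_mul]


end helpers

/-- Per-relay survival function in the relay-selection analysis:
for independent Gamma variables `X, W, Y`,
`P(min(X, W) ≥ θ(Y + c))` in closed form. -/
theorem per_relay_survival_closed_form
    {Ω : Type*} [MeasurableSpace Ω] (μ : Measure Ω) [IsProbabilityMeasure μ]
    (m_x m_w m_y : ℕ) (hmx : 0 < m_x) (hmw : 0 < m_w) (hmy : 0 < m_y)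
    (s_x s_w s_y : ℝ) (hsx : 0 < s_x) (hsw : 0 < s_w) (hsy : 0 < s_y)
    (X W Y : Ω → ℝ) (hX : Measurable X) (hW : Measurable W) (hY : Measurable Y)
    (hXd : μ.map X = gammaMeasure m_x (1 / s_x))
    (hWd : μ.map W = gammaMeasure m_w (1 / s_w))
    (hYd : μ.map Y = gammaMeasure m_y (1 / s_y))
    (hindep : iIndepFun ![X, W, Y] μ)
    (θ c : ℝ) (hθ : 0 < θ) (hc : 0 < c) :
    (μ {ω | θ * (Y ω + c) ≤ min (X ω) (W ω)}).toReal =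
      Real.exp (-(θ * c * (1 / s_x + 1 / s_w))) *
        ∑ n ∈ Finset.range m_x, ∑ n' ∈ Finset.range m_w,
          ((θ / s_x) ^ n * (θ / s_w) ^ n' / ((Nat.factorial n : ℝ) * (Nat.factorial n' : ℝ))) *
          ∑ i ∈ Finset.range (n + n' + 1),
            ((n + n').choose i : ℝ) * c ^ (n + n' - i) *
            (Real.Gamma ((m_y : ℝ) + i) / (Real.Gamma m_y * s_y ^ m_y)) *
            (θ * (1 / s_x + 1 / s_w) + 1 / s_y) ^ (-((m_y : ℤ) + i)) := by
  have hrx : (0:ℝ) < 1 / s_x := by positivity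
  have hrw : (0:ℝ) < 1 / s_w := by positivity
  have hry : (0:ℝ) < 1 / s_y := by positivity
  set Z : Ω → ℝ := fun ω => min (X ω) (W ω) with hZdef
  have hZ : Measurable Z := hX.min hW
  have hmeas : ∀ i, Measurable (![X, W, Y] i) := by
    intro i; fin_cases i
    · exact hX
    · exact hW
    · exact hY
  have hXW : IndepFun X W μ := by
    have := hindep.indepFun (i := 0) (j := 1) (by decide)
    simpa using this
  have hpair : IndepFun (fun ω => (X ω, W ω)) Y μ := by
    have := hindep.indepFun_prodMk hmeas 0 1 2 (by decide) (by decide)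
    simpa using this
  have hYZ : IndepFun Y Z μ :=
    (hpair.comp (measurable_fst.min measurable_snd) measurable_id).symm
  have hmap : μ.map (fun ω => (Y ω, Z ω)) = (μ.map Y).prod (μ.map Z) :=
    (indepFun_iff_map_prod_eq_prod_map_map hY.aemeasurable hZ.aemeasurable).mp hYZ
  have hs_meas : MeasurableSet {p : ℝ × ℝ | θ * (p.1 + c) ≤ p.2} :=
    measurableSet_le ((measurable_fst.add_const c).const_mul θ) measurable_snd
  -- step: event probability as iterated integral
  have key1 : μ {ω | θ * (Y ω + c) ≤ min (X ω) (W ω)}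
      = ∫⁻ y, (μ.map Z) (Ici (θ * (y + c))) ∂(μ.map Y) := by
    have hev : {ω | θ * (Y ω + c) ≤ min (X ω) (W ω)}
        = (fun ω => (Y ω, Z ω)) ⁻¹' {p : ℝ × ℝ | θ * (p.1 + c) ≤ p.2} := rfl
    have hpre : ∀ y : ℝ, Prod.mk y ⁻¹' {p : ℝ × ℝ | θ * (p.1 + c) ≤ p.2}
        = Set.Ici (θ * (y + c)) := fun y => by ext z; simp [Set.mem_Ici]
    rw [hev, ← Measure.map_apply (hY.prodMk hZ) hs_meas, hmap,
      Measure.prod_apply hs_meas]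
    simp_rw [hpre]
  -- survival of Z
  have hZmap : ∀ t : ℝ, 0 < t → μ.map Z (Ici t)
      = ENNReal.ofReal (survFn m_x (1/s_x) t * survFn m_w (1/s_w) t) := by
    intro t ht
    rw [Measure.map_apply hZ measurableSet_Ici]
    have hpre : Z ⁻¹' Ici t = X ⁻¹' Ici t ∩ W ⁻¹' Ici t := by
      ext ω; simp [hZdef, Set.mem_Ici, le_min_iff]
    rw [hpre, hXW.measure_inter_preimage_eq_mul _ _ measurableSet_Ici measurableSet_Ici,
      ← Measure.map_apply hX measurableSet_Ici, ← Measure.map_apply hW measurableSet_Ici,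
      hXd, hWd, gammaMeasure_Ici hmx hrx ht, gammaMeasure_Ici hmw hrw ht,
      ← ENNReal.ofReal_mul (survFn_nonneg hrx ht.le)]
  -- a.e. positivity of Y
  have hYpos : ∀ᵐ y ∂(μ.map Y), 0 < y := by
    rw [hYd]
    rw [ae_iff]
    have hcompl : {y : ℝ | ¬ 0 < y} = Set.Iic 0 := by ext y; simp [not_lt]
    rw [hcompl, gammaMeasure, withDensity_apply _ measurableSet_Iic,
      ← MeasureTheory.restrict_Iio_eq_restrict_Iic]
    exact lintegral_gammaPDF_of_nonpos le_rfl
  have key2 : ∫⁻ y, (μ.map Z) (Ici (θ * (y + c))) ∂(μ.map Y)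
      = ∫⁻ y, ENNReal.ofReal
          (survFn m_x (1/s_x) (θ*(y+c)) * survFn m_w (1/s_w) (θ*(y+c))) ∂(μ.map Y) := by
    refine lintegral_congr_ae (hYpos.mono fun y hy => ?_)
    exact hZmap _ (by positivity)
  -- density
  have hcont : Continuous (fun y : ℝ =>
      survFn m_x (1/s_x) (θ*(y+c)) * survFn m_w (1/s_w) (θ*(y+c))) := by
    have haff : Continuous (fun y : ℝ => θ*(y+c)) := by continuity
    exact ((continuous_survFn m_x (1/s_x)).comp haff).mul
      ((continuous_survFn m_w (1/s_w)).comp haff)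
  have key3 : ∫⁻ y, ENNReal.ofReal
          (survFn m_x (1/s_x) (θ*(y+c)) * survFn m_w (1/s_w) (θ*(y+c))) ∂(μ.map Y)
      = ∫⁻ y in Ioi 0, ENNReal.ofReal (gammaPDFReal m_y (1/s_y) y *
          (survFn m_x (1/s_x) (θ*(y+c)) * survFn m_w (1/s_w) (θ*(y+c)))) := by
    have hpdfmeas : Measurable (gammaPDF (m_y : ℝ) (1/s_y)) :=
      (measurable_gammaPDFReal _ _).ennreal_ofReal
    rw [hYd, gammaMeasure, lintegral_withDensity_eq_lintegral_mul _
      hpdfmeas (hcont.measurable.ennreal_ofReal)]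
    rw [← lintegral_add_compl (μ := volume)
      (f := fun y => (gammaPDF m_y (1/s_y) * fun y => ENNReal.ofReal
        (survFn m_x (1/s_x) (θ*(y+c)) * survFn m_w (1/s_w) (θ*(y+c)))) y) measurableSet_Ioi]
    have hIic : ∫⁻ y in (Ioi (0:ℝ))ᶜ, (gammaPDF m_y (1/s_y) * fun y => ENNReal.ofReal
        (survFn m_x (1/s_x) (θ*(y+c)) * survFn m_w (1/s_w) (θ*(y+c)))) y = 0 := by
      rw [compl_Ioi, ← MeasureTheory.restrict_Iio_eq_restrict_Iic]
      have hz : ∀ᵐ (y:ℝ) ∂(volume.restrict (Set.Iio (0:ℝ))),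
          (gammaPDF (m_y:ℝ) (1/s_y) * fun y => ENNReal.ofReal
            (survFn m_x (1/s_x) (θ*(y+c)) * survFn m_w (1/s_w) (θ*(y+c)))) y = 0 :=
        (ae_restrict_iff' measurableSet_Iio).mpr (ae_of_all _ fun y hy => by
          simp [Pi.mul_apply, gammaPDF_of_neg hy])
      rw [lintegral_congr_ae hz, lintegral_zero]
    rw [hIic, add_zero]
    refine setLIntegral_congr_fun measurableSet_Ioi (fun y hy => ?_)
    have hy : (0:ℝ) < y := hy
    rw [Pi.mul_apply, gammaPDF, ← ENNReal.ofReal_mul (gammaPDFReal_nonneg (by exact_mod_cast hmy) hry y)]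
  -- to real integral
  have hnonneg : ∀ y ∈ Ioi (0:ℝ), 0 ≤ gammaPDFReal m_y (1/s_y) y *
      (survFn m_x (1/s_x) (θ*(y+c)) * survFn m_w (1/s_w) (θ*(y+c))) := by
    intro y hy
    have hy : (0:ℝ) < y := hy
    have ht : (0:ℝ) ≤ θ*(y+c) := by positivity
    exact mul_nonneg (gammaPDFReal_nonneg (by exact_mod_cast hmy) hry y)
      (mul_nonneg (survFn_nonneg hrx ht) (survFn_nonneg hrw ht))
  have key4 : ∫ y in Ioi 0, gammaPDFReal m_y (1/s_y) y *
        (survFn m_x (1/s_x) (θ*(y+c)) * survFn m_w (1/s_w) (θ*(y+c)))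
      = (∫⁻ y in Ioi 0, ENNReal.ofReal (gammaPDFReal m_y (1/s_y) y *
          (survFn m_x (1/s_x) (θ*(y+c)) * survFn m_w (1/s_w) (θ*(y+c))))).toReal := by
    refine integral_eq_lintegral_of_nonneg_ae ?_ ?_
    · exact (ae_restrict_iff' measurableSet_Ioi).mpr (ae_of_all _ hnonneg)
    · exact (((measurable_gammaPDFReal _ _).mul hcont.measurable)).aestronglyMeasurable.restrict
  rw [key1, key2, key3, ← key4]
  exact final_integral m_x m_w m_y hmx hmw hmy s_x s_w s_y hsx hsw hsy θ c hθ hc
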